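/- Let $p$ be a prime, $L \ge 2$, and $r \ge 4(L-1)$. Every matrix $A \in \mathrm{SL}_2(\mathbb{Z}/p^r\mathbb{Z})$ with $A \equiv I \pmod{p^{4(L-1)}}$ can be written as a product $\begin{pmatrix}1 & x \\ 0 & 1\end{pmatrix}\begin{pmatrix}1 & 0 \\ y & 1\end{pmatrix}\begin{pmatrix}1 & z \\ 0 & 1\end{pmatrix}\begin{pmatrix}1 & 0 \\ w & 1\end{pmatrix}$ with $x, y, z, w \in \mathbb{Z}/p^r\mathbb{Z}$ all divisible by $p^{2(L-1)}$. -/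

import Mathlib

open Matrix

lemma sl2_decomp_aux {R : Type*} [CommRing R] (a b c d q δ e : R)
    (hδ : d - 1 = q * q * δ) (hinv : d * e = 1) (hdet : a * d - b * c = 1) :
    !![a, b; c, d] = !![1, (b - q*δ)*e; 0, 1] * !![1, 0; q, 1] *
      !![1, q*δ; 0, 1] * !![1, 0; (c - q)*e, 1] := by
  ext i j
  fin_cases i <;> fin_cases j <;>
    simp [Matrix.mul_apply, Fin.sum_univ_succ]
  · linear_combination (1 - q*q*δ*e) * hdet + (-a + b*c*e + (c-q)*(b-q*δ)*e*e) * hδ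
      + (a*q*q*δ - b*c - (c-q)*(b-q*δ)*e) * hinv
  · linear_combination (b-q*δ)*e*hδ - (b-q*δ)*hinv
  · linear_combination (c-q)*e*hδ - (c-q)*hinv
  · linear_combination hδ

/-- an element of `SL₂(ℤ/p^rℤ)` congruent to `I` mod `p^{4(L-1)}`
is a product of four elementary matrices with off-diagonal entries divisible
by `p^{2(L-1)}`. -/
theorem sl2_congruence_decomposition (p r L : ℕ) (hp : p.Prime) (hL : 2 ≤ L)
    (hr : 4 * (L - 1) ≤ r)
    (A : Matrix.SpecialLinearGroup (Fin 2) (ZMod (p ^ r)))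
    (hA : ∀ i j, (p : ZMod (p ^ r)) ^ (4 * (L - 1)) ∣
      ((A : Matrix (Fin 2) (Fin 2) (ZMod (p ^ r))) i j - (1 : Matrix (Fin 2) (Fin 2) (ZMod (p ^ r))) i j)) :
    ∃ x y z w : ZMod (p ^ r),
      (p : ZMod (p ^ r)) ^ (2 * (L - 1)) ∣ x ∧
      (p : ZMod (p ^ r)) ^ (2 * (L - 1)) ∣ y ∧
      (p : ZMod (p ^ r)) ^ (2 * (L - 1)) ∣ z ∧
      (p : ZMod (p ^ r)) ^ (2 * (L - 1)) ∣ w ∧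
      (A : Matrix (Fin 2) (Fin 2) (ZMod (p ^ r)))
        = !![1, x; 0, 1] * !![1, 0; y, 1] * !![1, z; 0, 1] * !![1, 0; w, 1] := by
  set R := ZMod (p ^ r)
  set q : R := (p : R) ^ (2 * (L - 1)) with hq
  set a := (A : Matrix (Fin 2) (Fin 2) R) 0 0
  set b := (A : Matrix (Fin 2) (Fin 2) R) 0 1
  set c := (A : Matrix (Fin 2) (Fin 2) R) 1 0
  set d := (A : Matrix (Fin 2) (Fin 2) R) 1 1
  have hq2 : (p : R) ^ (4 * (L - 1)) = q * q := by
    rw [hq, ← pow_add]; ring_nf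
  obtain ⟨δ, hδ⟩ := hA 1 1
  rw [hq2] at hδ
  simp [Matrix.one_apply] at hδ
  -- hδ : d - 1 = q * q * δ
  have hbq : q ∣ b := by
    obtain ⟨β, hβ⟩ := hA 0 1
    rw [hq2] at hβ
    simp [Matrix.one_apply] at hβ
    exact ⟨q * β, hβ.trans (mul_assoc _ _ _)⟩
  have hcq : q ∣ c := by
    obtain ⟨γ, hγ⟩ := hA 1 0
    rw [hq2] at hγ
    simp [Matrix.one_apply] at hγ
    exact ⟨q * γ, hγ.trans (mul_assoc _ _ _)⟩
  -- d is a unit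
  have hdu : IsUnit d := by
    have hpnil : IsNilpotent ((p : R)) := ⟨r, by rw [← Nat.cast_pow, ZMod.natCast_self]⟩
    have hqnil : IsNilpotent q := by
      obtain ⟨n, hn⟩ := hpnil
      exact ⟨n, by rw [hq, ← pow_mul, mul_comm, pow_mul, hn, zero_pow (by omega : 2 * (L-1) ≠ 0)]⟩
    have hnil : IsNilpotent (q * q * δ) :=
      (Commute.all (q * q) δ).isNilpotent_mul_right
        ((Commute.all q q).isNilpotent_mul_left hqnil)
    have : d = 1 + q * q * δ := by linear_combination hδ
    rw [this]
    exact IsNilpotent.isUnit_add_left_of_commute hnil isUnit_one (Commute.all _ _)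
  obtain ⟨u, hu⟩ := hdu
  set e : R := ((u⁻¹ : Rˣ) : R) with he
  have hinv : d * e = 1 := by rw [← hu, he]; exact u.mul_inv
  have hdet : a * d - b * c = 1 := by
    have := A.property
    rw [Matrix.det_fin_two] at this
    exact this
  refine ⟨(b - q*δ)*e, q, q*δ, (c - q)*e, ?_, dvd_refl _, dvd_mul_right _ _, ?_, ?_⟩
  · exact ((hbq.sub (dvd_mul_right _ _)).mul_right _)
  · exact ((hcq.sub (dvd_refl _)).mul_right _)
  · have key := sl2_decomp_aux a b c d q δ e hδ hinv hdet
    rw [← key]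
    ext i j
    fin_cases i <;> fin_cases j <;> simp [a, b, c, d]
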